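/- Over a separation algebra Σ, let skip be the command with ⟦skip⟧(s) = {s} for all s ∈ Σ, lifted to histories. Then for every state predicate p ⊆ Σ: now(p) ⊆ wp(skip)(now(p) * past(p)). -/

import Mathlib

open Classical

/-- A separation algebra: a partial commutative monoid with a set of units.
The partial binary operation is modeled as an `Option`-valued function;
`op a b = some c` means the composition is defined and equals `c`. -/
structure SepAlg (α : Type) : Type where
  op : α → α → Option α
  emp : Set α
  comm : ∀ a b : α, op a b = op b a
  assoc : ∀ a b c : α,
    (op a b).bind (fun x => op x c) = (op b c).bind (fun y => op a y)
  unit_exists : ∀ a : α, ∃ u ∈ emp, op a u = some a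
  unit_undef : ∀ u u' : α, u ∈ emp → u' ∈ emp → u ≠ u' → op u u' = none

/-- Separating conjunction of predicates. -/
def SepAlg.sepConj {α : Type} (A : SepAlg α) (p q : Set α) : Set α :=
  { s | ∃ a ∈ p, ∃ b ∈ q, A.op a b = some s }

/-- Separating implication of predicates: `p -* q = { s | {s} * p ⊆ q }`. -/
def SepAlg.sepImp {α : Type} (A : SepAlg α) (p q : Set α) : Set α :=
  { s | ∀ a ∈ p, ∀ t : α, A.op s a = some t → t ∈ q }

/-- Lifting of a command semantics to predicates (post-image). -/
def postP {β : Type} (f : β → Set β) (p : Set β) : Set β :=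
  { t | ∃ s ∈ p, t ∈ f s }

/-- Locality of a command semantics with respect to a separation algebra. -/
def IsLocalCmd {α : Type} (A : SepAlg α) (f : α → Set α) : Prop :=
  ∀ p q o : Set α, postP f p ⊆ q → postP f (A.sepConj p o) ⊆ A.sepConj q o

/-- Weakest precondition. -/
def wpre {α : Type} (f : α → Set α) (q : Set α) : Set α := { s | f s ⊆ q }

/-- The future predicate `⟨p⟩ c ⟨q⟩ := p -* wp(c)(q)`. -/
def fut {α : Type} (A : SepAlg α) (f : α → Set α) (p q : Set α) : Set α :=
  A.sepImp p (wpre f q)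

/-- Pointwise lifting of a partial composition to lists (defined iff the lists
have equal length and are pointwise composable). -/
def listOp {β : Type} (f : β → β → Option β) : List β → List β → Option (List β)
  | [], [] => some []
  | a :: as, b :: bs => do
      let c ← f a b
      let cs ← listOp f as bs
      pure (c :: cs)
  | _, _ => none

/-- Separating conjunction of history predicates. -/
def hSep {β : Type} (f : β → β → Option β) (a b : Set (List β)) : Set (List β) :=
  { σ | ∃ τ₁ ∈ a, ∃ τ₂ ∈ b, listOp f τ₁ τ₂ = some σ }

/-- Separating implication of history predicates (restricted to nonempty
sequences, i.e. to Σ⁺). -/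
def hSepImp {β : Type} (f : β → β → Option β) (a b : Set (List β)) : Set (List β) :=
  { σ | σ ≠ [] ∧ ∀ τ ∈ a, ∀ ρ : List β, listOp f σ τ = some ρ → ρ ∈ b }

/-- Frameable history predicates: closed under duplicating the last state. -/
def Frameable {β : Type} (a : Set (List β)) : Prop :=
  ∀ (σ : List β) (s : β), σ ++ [s] ∈ a → σ ++ [s, s] ∈ a

/-- The now predicate `now(p)`. -/
def nowP {α : Type} (p : Set α) : Set (List α) :=
  { σ | ∃ (ρ : List α) (s : α), s ∈ p ∧ σ = ρ ++ [s] }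

/-- The past predicate `past(p)`. -/
def pastP {α : Type} (p : Set α) : Set (List α) :=
  { σ | ∃ (ρ₁ : List α) (s : α) (ρ₂ : List α), s ∈ p ∧ σ = ρ₁ ++ s :: ρ₂ }

/-- Lifting of a command semantics to computation histories. -/
def lsem {α : Type} (f : α → Set α) (σ : List α) : Set (List α) :=
  { τ | ∃ (ρ : List α) (s₁ s₂ : α), σ = ρ ++ [s₁] ∧ s₂ ∈ f s₁ ∧ τ = ρ ++ [s₁, s₂] }

/-- Weakest precondition on history predicates (over Σ⁺, i.e. nonempty sequences). -/
def hwp {α : Type} (f : α → Set α) (a : Set (List α)) : Set (List α) :=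
  { σ | σ ≠ [] ∧ lsem f σ ⊆ a }


/-- Key computation: combining a unit-list with the original list. -/
lemma listOp_units {α : Type} (A : SepAlg α) (u : α → α)
    (hu : ∀ t, A.op (u t) t = some t) (us s : α)
    (h1 : A.op (u us) s = some s) (h2 : A.op s us = some s) :
    ∀ ρ : List α,
      listOp A.op (ρ.map u ++ [u us, s]) (ρ ++ [s, us]) = some (ρ ++ [s, s]) := by
  intro ρ
  induction ρ with
  | nil => simp [listOp, h1, h2]
  | cons a as ih => simp [listOp, hu a, ih]

/-- a stuttering skip step can record the current state in a
past predicate: `now(p) ⊆ wp(skip)(now(p) * past(p))`. -/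
theorem stmt10 {α : Type} (A : SepAlg α) (p : Set α) :
    nowP p ⊆ hwp (fun s => ({s} : Set α)) (hSep A.op (nowP p) (pastP p)) := by
  intro σ hσ
  obtain ⟨ρ, s, hs, rfl⟩ := hσ
  refine ⟨by simp, ?_⟩
  intro τ hτ
  obtain ⟨ρ', s₁, s₂, heq, hs₂, rfl⟩ := hτ
  have hlen : ρ.length = ρ'.length := by
    have := congrArg List.length heq
    simpa using this
  obtain ⟨rfl, hss⟩ := List.append_inj heq hlen
  obtain rfl : s₁ = s := by simpa using hss.symm
  simp only [Set.mem_singleton_iff] at hs₂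
  subst hs₂
  choose u hu1 hu2 using A.unit_exists
  have huu : u (u s₂) = u s₂ := by
    by_contra h
    have hn := A.unit_undef (u s₂) (u (u s₂)) (hu1 s₂) (hu1 (u s₂)) (fun h' => h h'.symm)
    have h2 := hu2 (u s₂)
    rw [hn] at h2
    exact Option.some_ne_none _ h2.symm
  refine ⟨ρ.map (fun t => u t) ++ [u (u s₂), s₂], ⟨ρ.map (fun t => u t) ++ [u (u s₂)], s₂, hs, by simp⟩,
    ρ ++ [s₂, u s₂], ⟨ρ, s₂, [u s₂], hs, by simp⟩, ?_⟩
  exact listOp_units A (fun t => u t) (fun t => by rw [A.comm]; exact hu2 t) (u s₂) s₂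
    (by simp only [huu]; rw [A.comm]; exact hu2 s₂) (hu2 s₂) ρ
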